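/- If n and m are both even with 3 ≤ n ≤ m−2, then for every red/blue coloring of the edges of K_{n+m−1} there is a red copy of the star K_{1,n} or a blue copy of K_{1,m}+e (a star with m edges plus an edge joining two leaves). -/

import Mathlib

open SimpleGraph

/-- `Contains G H` : the graph `G` contains a copy of `H`. -/
def Contains {V W : Type*} (G : SimpleGraph V) (H : SimpleGraph W) : Prop :=
  ∃ f : W → V, Function.Injective f ∧ ∀ a b, H.Adj a b → G.Adj (f a) (f b)

/-- The star `K_{1,n}` on `n+1` vertices: vertex `0` is joined to all others. -/
def starG (n : ℕ) : SimpleGraph (Fin (n + 1)) :=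
  SimpleGraph.fromRel (fun a _ => a = 0)

/-- `K_{1,m}+e` on `m+1` vertices: vertex `0` joined to all others, plus the edge `{1,2}`. -/
def starPlusE (m : ℕ) : SimpleGraph (Fin (m + 1)) :=
  SimpleGraph.fromRel (fun a b => a = 0 ∨ (a = 1 ∧ b = 2))

lemma exists_inj_into {V : Type*} [DecidableEq V] (s : Finset V) (k : ℕ) (h : s.card = k) :
    ∃ g : Fin k → V, Function.Injective g ∧ ∀ i, g i ∈ s := by
  subst h
  exact ⟨fun i => (s.equivFin.symm i : V),
    fun a b hab => (s.equivFin.symm.injective (Subtype.ext hab)),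
    fun i => (s.equivFin.symm i).2⟩

lemma contains_star {V : Type*} (G : SimpleGraph V) (n : ℕ) (v : V)
    (s : Finset V) (hcard : s.card = n) (hadj : ∀ u ∈ s, G.Adj v u) :
    Contains G (starG n) := by
  classical
  obtain ⟨g, hginj, hgmem⟩ := exists_inj_into s n hcard
  refine ⟨Fin.cons v g, ?_, ?_⟩
  · rw [Fin.cons_injective_iff]
    refine ⟨?_, hginj⟩
    rintro ⟨i, hi⟩
    exact (hadj _ (hgmem i)).ne hi.symm
  · intro a b hab
    simp only [starG, fromRel_adj] at hab
    obtain ⟨hne, h0⟩ := hab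
    rcases h0 with h0 | h0
    · subst h0
      induction b using Fin.cases with
      | zero => exact absurd rfl hne
      | succ j => simpa using hadj _ (hgmem j)
    · subst h0
      induction a using Fin.cases with
      | zero => exact absurd rfl hne
      | succ j => simpa using (hadj _ (hgmem j)).symm

lemma contains_spe {V : Type*} (G : SimpleGraph V) (k : ℕ) (v x y : V)
    (s : Finset V) (hcard : s.card = k + 3) (hxs : x ∈ s) (hys : y ∈ s) (hxy : x ≠ y)
    (hadjv : ∀ u ∈ s, G.Adj v u) (hadj : G.Adj x y) :
    Contains G (starPlusE (k + 3)) := by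
  classical
  have hts : (s.erase x).erase y ⊆ s := fun u hu =>
    Finset.mem_of_mem_erase (Finset.mem_of_mem_erase hu)
  have htc : ((s.erase x).erase y).card = k + 1 := by
    rw [Finset.card_erase_of_mem (Finset.mem_erase.2 ⟨hxy.symm, hys⟩),
      Finset.card_erase_of_mem hxs, hcard]; omega
  obtain ⟨g, hginj, hgmem⟩ := exists_inj_into _ (k + 1) htc
  set f : Fin (k + 3 + 1) → V := Fin.cons v (Fin.cons x (Fin.cons y g)) with hf
  have hf0 : f 0 = v := rfl
  have hf1 : f 1 = x := rfl
  have hf2 : f 2 = y := rfl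
  have hmem : ∀ i : Fin (k + 3 + 1), i ≠ 0 → f i ∈ s := by
    intro i hi
    induction i using Fin.cases with
    | zero => exact absurd rfl hi
    | succ j =>
      induction j using Fin.cases with
      | zero => simpa [hf] using hxs
      | succ l =>
        induction l using Fin.cases with
        | zero => exact hys
        | succ p => simpa [hf] using hts (hgmem p)
  refine ⟨f, ?_, ?_⟩
  · rw [hf, Fin.cons_injective_iff, Fin.cons_injective_iff, Fin.cons_injective_iff]
    refine ⟨?_, ?_, ?_, hginj⟩
    · rintro ⟨i, hi⟩
      have h1 : f i.succ ∈ s := hmem i.succ (Fin.succ_ne_zero i)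
      simp only [hf, Fin.cons_succ] at h1
      rw [hi] at h1
      exact (hadjv _ h1).ne rfl
    · rintro ⟨i, hi⟩
      induction i using Fin.cases with
      | zero => exact hxy (by simpa using hi.symm)
      | succ p =>
        have := hgmem p
        simp only [Fin.cons_succ] at hi
        rw [hi] at this
        exact (Finset.mem_erase.1 (Finset.mem_of_mem_erase this)).1 rfl
    · rintro ⟨i, hi⟩
      have := hgmem i
      rw [hi] at this
      exact (Finset.mem_erase.1 this).1 rfl
  · intro a b hab
    simp only [starPlusE, fromRel_adj] at hab
    obtain ⟨hne, hc⟩ := hab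
    rcases hc with (h0 | ⟨h1, h2⟩) | (h0 | ⟨h1, h2⟩)
    · subst h0; rw [hf0]; exact hadjv _ (hmem b (fun h => hne h.symm))
    · subst h1; subst h2; rw [hf1, hf2]; exact hadj
    · subst h0; rw [hf0]; exact (hadjv _ (hmem a hne)).symm
    · subst h1; subst h2; rw [hf1, hf2]; exact hadj.symm

theorem stmt_0 (n m : ℕ) (hne : Even n) (hme : Even m) (hn : 3 ≤ n) (hnm : n + 2 ≤ m)
    (R : SimpleGraph (Fin (n + m - 1))) :
    Contains R (starG n) ∨ Contains Rᶜ (starPlusE m) := by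
  classical
  haveI : DecidableRel R.Adj := Classical.decRel _
  have hcardV : Fintype.card (Fin (n + m - 1)) = n + m - 1 := Fintype.card_fin _
  by_cases hstar : ∃ v, n ≤ R.degree v
  · obtain ⟨v, hv⟩ := hstar
    obtain ⟨s, hs, hscard⟩ := Finset.exists_subset_card_eq hv
    exact Or.inl (contains_star R n v s hscard
      (fun u hu => (R.mem_neighborFinset v u).1 (hs hu)))
  · push_neg at hstar
    have hdeg2 : ∃ v, R.degree v + 2 ≤ n := by
      by_contra hc
      push_neg at hc
      have hall : ∀ v, R.degree v = n - 1 := fun v => by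
        have h1 := hstar v; have h2 := hc v; omega
      have hsum := R.sum_degrees_eq_twice_card_edges
      rw [Finset.sum_congr rfl (fun v _ => hall v), Finset.sum_const, smul_eq_mul,
        Finset.card_univ, hcardV] at hsum
      have ho : Odd ((n + m - 1) * (n - 1)) :=
        (Nat.Even.sub_odd (by omega) (hne.add hme) odd_one).mul
          (Nat.Even.sub_odd (by omega) hne odd_one)
      rw [hsum] at ho
      exact (Nat.not_even_iff_odd.mpr ho) (even_two_mul _)
    obtain ⟨v, hv⟩ := hdeg2
    have hcompl : m ≤ Rᶜ.degree v := by
      rw [R.degree_compl, hcardV]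
      omega
    obtain ⟨s, hs, hscard⟩ := Finset.exists_subset_card_eq hcompl
    have hadjv : ∀ u ∈ s, Rᶜ.Adj v u := fun u hu => (Rᶜ.mem_neighborFinset v u).1 (hs hu)
    by_cases hblue : ∃ x ∈ s, ∃ y ∈ s, x ≠ y ∧ Rᶜ.Adj x y
    · obtain ⟨x, hxs, y, hys, hxy, hxyadj⟩ := hblue
      obtain ⟨k, rfl⟩ : ∃ k, m = k + 3 := ⟨m - 3, by omega⟩
      exact Or.inr (contains_spe Rᶜ k v x y s hscard hxs hys hxy hadjv hxyadj)
    · push_neg at hblue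
      obtain ⟨x, hxs⟩ : s.Nonempty := by
        rw [← Finset.card_pos, hscard]; omega
      have hred : ∀ u ∈ s.erase x, R.Adj x u := by
        intro u hu
        have hux : u ≠ x := (Finset.mem_erase.1 hu).1
        have hus : u ∈ s := (Finset.mem_erase.1 hu).2
        have hnb := hblue x hxs u hus hux.symm
        by_contra hcon
        exact hnb ((R.compl_adj x u).2 ⟨hux.symm, hcon⟩)
      have hle : n ≤ (s.erase x).card := by
        rw [Finset.card_erase_of_mem hxs, hscard]; omega
      obtain ⟨u, hu, hucard⟩ := Finset.exists_subset_card_eq hle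
      exact Or.inl (contains_star R n x u hucard (fun w hw => hred w (hu hw)))
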